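/- Given positive integers s_1, s_2, and a, let g = gcd(s_1, s_2) and write a = d·e where e·g = gcd(s_1, a·s_2) (so e = gcd(s_1, a·s_2)/g and d = a/e, both positive integers). Then there exist matrices A, B, B', C in GL_2(ℤ) such that: A·(s_1, s_2)^T = (g, 0)^T; B·(s_1, e·s_2)^T = (e·g, 0)^T; B'·(s_1, e·s_2)^T = (e·g, 0)^T; C·(s_1, a·s_2)^T = (e·g, 0)^T; and moreover diag(e, 1)·A = B·diag(1, e) and diag(1, d)·B' = C·diag(1, d) as 2×2 integer matrices. -/

import Mathlib

open Matrix

/-- The matrix form of the Euclidean-algorithm lemma: there are matrices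
`A, B, B', C ∈ GL₂(ℤ)` taking `(s₁, s₂)ᵀ ↦ (g, 0)ᵀ`, `(s₁, e·s₂)ᵀ ↦ (e·g, 0)ᵀ`
(twice) and `(s₁, a·s₂)ᵀ ↦ (e·g, 0)ᵀ`, with
`diag(e,1)·A = B·diag(1,e)` and `diag(1,d)·B' = C·diag(1,d)`. -/
theorem stmt_6 (s₁ s₂ a : ℕ) (hs₁ : 0 < s₁) (hs₂ : 0 < s₂) (ha : 0 < a)
    (g e d : ℕ) (hg : g = Nat.gcd s₁ s₂) (he : e * g = Nat.gcd s₁ (a * s₂))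
    (hd : a = d * e) :
    ∃ A B B' C : GL (Fin 2) ℤ,
      (A : Matrix (Fin 2) (Fin 2) ℤ).mulVec ![(s₁ : ℤ), (s₂ : ℤ)] = ![(g : ℤ), 0] ∧
      (B : Matrix (Fin 2) (Fin 2) ℤ).mulVec ![(s₁ : ℤ), (e : ℤ) * s₂] = ![(e : ℤ) * g, 0] ∧
      (B' : Matrix (Fin 2) (Fin 2) ℤ).mulVec ![(s₁ : ℤ), (e : ℤ) * s₂] = ![(e : ℤ) * g, 0] ∧
      (C : Matrix (Fin 2) (Fin 2) ℤ).mulVec ![(s₁ : ℤ), (a : ℤ) * s₂] = ![(e : ℤ) * g, 0] ∧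
      Matrix.diagonal ![(e : ℤ), 1] * (A : Matrix (Fin 2) (Fin 2) ℤ) =
        (B : Matrix (Fin 2) (Fin 2) ℤ) * Matrix.diagonal ![1, (e : ℤ)] ∧
      Matrix.diagonal ![1, (d : ℤ)] * (B' : Matrix (Fin 2) (Fin 2) ℤ) =
        (C : Matrix (Fin 2) (Fin 2) ℤ) * Matrix.diagonal ![1, (d : ℤ)] := by
  -- divisibility facts
  have hgd2 : g ∣ s₂ := hg ▸ Nat.gcd_dvd_right _ _
  have hegd1 : e * g ∣ s₁ := he ▸ Nat.gcd_dvd_left _ _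
  obtain ⟨m, hm⟩ := hgd2
  obtain ⟨n, hn⟩ := hegd1
  have hg0 : (0:ℤ) < (g:ℤ) := by
    have : 0 < g := hg ▸ Nat.gcd_pos_of_pos_left _ hs₁
    exact_mod_cast this
  have heg0 : (0:ℤ) < (e:ℤ) * g := by
    have : 0 < e * g := he ▸ Nat.gcd_pos_of_pos_left _ hs₁
    exact_mod_cast this
  set p : ℤ := Int.gcdA s₁ s₂ with hp
  set q : ℤ := Int.gcdB s₁ s₂ with hq
  set u : ℤ := Int.gcdA s₁ (a * s₂) with hu
  set v : ℤ := Int.gcdB s₁ (a * s₂) with hv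
  have hpq : (g:ℤ) = s₁ * p + s₂ * q := by
    have h := Int.gcd_eq_gcd_ab (s₁:ℤ) (s₂:ℤ)
    rw [hg]
    simpa using h
  have huv : (e:ℤ) * g = s₁ * u + (a * s₂) * v := by
    have h := Int.gcd_eq_gcd_ab (s₁:ℤ) ((a:ℤ) * s₂)
    have : ((Nat.gcd s₁ (a * s₂) : ℕ) : ℤ) = (s₁:ℤ) * u + ((a:ℤ) * s₂) * v := by
      rw [← Nat.cast_mul, Int.gcd_natCast_natCast] at h
      simpa [hu, hv] using h
    rw [← this, ← he]; push_cast; try ring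
  have hm' : (s₂:ℤ) = g * m := by exact_mod_cast hm
  have hn' : (s₁:ℤ) = (e:ℤ) * g * n := by push_cast [hn]; ring
  have hd' : (a:ℤ) = d * e := by exact_mod_cast hd
  -- key determinant identities
  have key1 : (e:ℤ) * n * p + m * q = 1 := by
    have h : (g:ℤ) * ((e:ℤ) * n * p + m * q) = (g:ℤ) * 1 := by
      rw [mul_one]
      calc (g:ℤ) * ((e:ℤ) * n * p + m * q)
          = ((e:ℤ) * g * n) * p + ((g:ℤ) * m) * q := by ring
        _ = (s₁:ℤ) * p + (s₂:ℤ) * q := by rw [← hn', ← hm']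
        _ = g := hpq.symm
    exact mul_left_cancel₀ (ne_of_gt hg0) h
  have key2 : (n:ℤ) * u + (d:ℤ) * m * v = 1 := by
    have h : ((e:ℤ) * g) * ((n:ℤ) * u + (d:ℤ) * m * v) = ((e:ℤ) * g) * 1 := by
      rw [mul_one]
      calc ((e:ℤ) * g) * ((n:ℤ) * u + (d:ℤ) * m * v)
          = ((e:ℤ) * g * n) * u + ((d:ℤ) * e) * ((g:ℤ) * m) * v := by ring
        _ = (s₁:ℤ) * u + (a:ℤ) * (s₂:ℤ) * v := by rw [← hn', ← hm', ← hd']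
        _ = (e:ℤ) * g := huv.symm
    exact mul_left_cancel₀ (ne_of_gt heg0) h
  have hco : ∀ S : Matrix.SpecialLinearGroup (Fin 2) ℤ,
      ((Matrix.SpecialLinearGroup.toGL S : GL (Fin 2) ℤ) : Matrix (Fin 2) (Fin 2) ℤ) = ↑S :=
    fun _ => rfl
  -- the four SL₂(ℤ) matrices
  let SA : Matrix.SpecialLinearGroup (Fin 2) ℤ :=
    ⟨!![p, q; -(m:ℤ), (e:ℤ) * n], by
      simp [Matrix.det_fin_two_of]; linear_combination key1⟩
  let SB : Matrix.SpecialLinearGroup (Fin 2) ℤ :=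
    ⟨!![(e:ℤ) * p, q; -(m:ℤ), (n:ℤ)], by
      simp [Matrix.det_fin_two_of]; linear_combination key1⟩
  let SB' : Matrix.SpecialLinearGroup (Fin 2) ℤ :=
    ⟨!![u, (d:ℤ) * v; -(m:ℤ), (n:ℤ)], by
      simp [Matrix.det_fin_two_of]; linear_combination key2⟩
  let SC : Matrix.SpecialLinearGroup (Fin 2) ℤ :=
    ⟨!![u, v; -((d:ℤ) * m), (n:ℤ)], by
      simp [Matrix.det_fin_two_of]; linear_combination key2⟩
  refine ⟨SA.toGL, SB.toGL, SB'.toGL, SC.toGL, ?_, ?_, ?_, ?_, ?_, ?_⟩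
  · funext i
    fin_cases i <;>
      simp [SA, hco, Matrix.SpecialLinearGroup.toGL, Matrix.mulVec, dotProduct, Fin.sum_univ_two]
    · linear_combination hpq.symm
    · linear_combination (-(m:ℤ)) * hn' + ((e:ℤ) * n) * hm'
  · funext i
    fin_cases i <;>
      simp [SB, hco, Matrix.SpecialLinearGroup.toGL, Matrix.mulVec, dotProduct, Fin.sum_univ_two]
    · linear_combination (e:ℤ) * hpq.symm
    · linear_combination (-(m:ℤ)) * hn' + ((e:ℤ) * n) * hm'
  · funext i
    fin_cases i <;>
      simp [SB', hco, Matrix.SpecialLinearGroup.toGL, Matrix.mulVec, dotProduct, Fin.sum_univ_two]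
    · linear_combination (-1:ℤ) * huv - (s₂:ℤ) * v * hd'
    · linear_combination (-(m:ℤ)) * hn' + ((e:ℤ) * n) * hm'
  · funext i
    fin_cases i <;>
      simp [SC, hco, Matrix.SpecialLinearGroup.toGL, Matrix.mulVec, dotProduct, Fin.sum_univ_two]
    · linear_combination huv.symm
    · linear_combination (-((d:ℤ) * m)) * hn' + (n:ℤ) * s₂ * hd' + (n:ℤ) * d * e * hm'
  · funext i j
    fin_cases i <;> fin_cases j <;>
      simp [SA, SB, hco, Matrix.SpecialLinearGroup.toGL, Matrix.mul_apply, Matrix.diagonal, Fin.sum_univ_two] <;> ring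
  · funext i j
    fin_cases i <;> fin_cases j <;>
      simp [SB', SC, hco, Matrix.SpecialLinearGroup.toGL, Matrix.mul_apply, Matrix.diagonal, Fin.sum_univ_two] <;> ring
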